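/- (Bayesian upper bound (A.13), one-parameter case, identity scale.) Suppose the one-parameter design problem of the context satisfies: (i) for every x₀ ∈ 𝒳 there exists β̃ ∈ ℬ with I(x₀,β) ≤ M(ξ[β̃],β) for all β ∈ ℬ; (ii) Q(β,β̃) ≤ c₁ exp(−|β − β̃|^γ) for all β, β̃ ∈ ℬ, with constants c₁, γ > 0; and (iii) π is a Borel probability measure on ℬ with π(S) ≥ c₃ Leb(S)/B for every Borel set S ⊆ ℬ, where B = β_max − β_min and c₃ > 0. Then every design ξ supported at at most N points satisfies Ψ_st(ξ) = ∫_ℬ log( M(ξ,β)/M(ξ[β],β) ) dπ(β) ≤ c₃ log c₁ − (c₃/(1+γ)) · (B/(2(N+1)))^γ. -/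

import Mathlib

open scoped BigOperators ENNReal

/-- An approximate design: a finitely supported probability measure on `X`,
given by its support points and positive weights summing to one. -/
structure Design (X : Type*) where
  support : Finset X
  w : X → ℝ
  w_pos : ∀ x ∈ support, 0 < w x
  w_zero : ∀ x ∉ support, w x = 0
  sum_one : ∑ x ∈ support, w x = 1

/-- Information of a design in the one-parameter case: `M(ξ,β) = ∑ₖ wₖ I(xₖ,β)`. -/
noncomputable def info {X : Type*} (I : X → ℝ → ℝ) (ξ : Design X) (β : ℝ) : ℝ :=
  ∑ x ∈ ξ.support, ξ.w x * I x β

/-- `negLog r` is `−log r` as an extended nonnegative real, with value `∞` for `r ≤ 0`.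
For an efficiency ratio `r ∈ [0,1]` this encodes the (possibly infinite) Bayesian loss
`−log r`; the criterion `Ψ_st(ξ) = ∫ log r dπ` (value `−∞` allowed) equals
`−∫⁻ negLog r dπ`, so `Ψ_st(ξ) ≤ U` is expressed as `ENNReal.ofReal (−U) ≤ ∫⁻ negLog r dπ`. -/
noncomputable def negLog (r : ℝ) : ℝ≥0∞ :=
  if r ≤ 0 then ⊤ else ENNReal.ofReal (-Real.log r)

open MeasureTheory Set Metric in
/-- Measure comparison for lower Lebesgue integrals. -/
lemma aux_meas_compare (π : Measure ℝ) (S : Set ℝ) (hS : MeasurableSet S) (c B : ℝ)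
    (h : ∀ T : Set ℝ, T ⊆ S → MeasurableSet T →
      ENNReal.ofReal c * volume T ≤ ENNReal.ofReal B * π T) (g : ℝ → ℝ≥0∞) :
    ENNReal.ofReal c * ∫⁻ x in S, g x ∂volume ≤ ENNReal.ofReal B * ∫⁻ x in S, g x ∂π := by
  rw [← smul_eq_mul, ← lintegral_smul_measure, ← smul_eq_mul, ← lintegral_smul_measure]
  refine lintegral_mono' (Measure.le_iff.2 fun s hs => ?_) le_rfl
  simp only [Measure.smul_apply, Measure.restrict_apply hs, smul_eq_mul]
  exact h (s ∩ S) inter_subset_right (hs.inter hS)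


open MeasureTheory Set Metric Real in
/-- Layer-cake lower bound for the `γ`-th power of the distance to a finite set of
at most `n` points, integrated over an interval. -/
lemma aux_layercake (F : Finset ℝ) (hF : F.Nonempty) (βmin βmax : ℝ) (hββ : βmin < βmax)
    (γ : ℝ) (hγ : 0 < γ) (n : ℕ) (hn : F.card ≤ n) :
    ENNReal.ofReal ((βmax - βmin) * ((βmax - βmin) / (2 * ((n : ℝ) + 1))) ^ γ / (1 + γ))
      ≤ ∫⁻ β in Icc βmin βmax, ENNReal.ofReal (infDist β ↑F ^ γ) ∂volume := by
  set B : ℝ := βmax - βmin with hBdef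
  have hB : 0 < B := by simp [hBdef]; linarith
  set q : ℝ := B / (2 * ((n : ℝ) + 1)) with hqdef
  have hq : 0 < q := by positivity
  set T : ℝ := q ^ γ with hTdef
  have hT : 0 < T := Real.rpow_pos_of_pos hq γ
  set d : ℝ → ℝ := fun β => infDist β (↑F : Set ℝ) with hddef
  have hd0 : ∀ β, 0 ≤ d β := fun β => infDist_nonneg
  have hdcont : Continuous d := continuous_infDist_pt _
  have hcont : Continuous fun β => d β ^ γ :=
    (Real.continuous_rpow_const hγ.le).comp hdcont
  have h2q : 2 * ((n : ℝ) + 1) * q = B := by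
    rw [hqdef]; field_simp
  have hsle : ∀ t ∈ Ioc (0:ℝ) T, t ^ (1/γ) ≤ q := by
    intro t ht
    calc t ^ (1/γ) ≤ T ^ (1/γ) := Real.rpow_le_rpow ht.1.le ht.2 (by positivity)
    _ = q := by
        rw [hTdef, ← Real.rpow_mul hq.le, mul_one_div, div_self hγ.ne', Real.rpow_one]
  have key : ∀ t ∈ Ioc (0:ℝ) T,
      ENNReal.ofReal (B - 2 * ((n : ℝ) + 1) * t ^ (1/γ))
        ≤ (volume.restrict (Icc βmin βmax)) {β | t < d β ^ γ} := by
    intro t ht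
    set s : ℝ := t ^ (1/γ) with hsdef
    have hs0 : 0 ≤ s := Real.rpow_nonneg ht.1.le _
    have hsq : s ≤ q := hsle t ht
    have cover : Icc βmin βmax ⊆
        ({β | t < d β ^ γ} ∩ Icc βmin βmax) ∪ ⋃ x ∈ F, Icc (x - s) (x + s) := by
      intro β hβ
      by_cases hlt : t < d β ^ γ
      · exact Or.inl ⟨hlt, hβ⟩
      · push_neg at hlt
        have hdβ : d β ≤ s := by
          calc d β = (d β ^ γ) ^ (1/γ) := by
                rw [← Real.rpow_mul (hd0 β), mul_one_div, div_self hγ.ne', Real.rpow_one]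
          _ ≤ t ^ (1/γ) := Real.rpow_le_rpow (Real.rpow_nonneg (hd0 β) _) hlt (by positivity)
        obtain ⟨y, hyF, hy⟩ := F.finite_toSet.isCompact.exists_infDist_eq_dist
          (Finset.coe_nonempty.2 hF) β
        have hdist : |β - y| ≤ s := by
          rw [← Real.dist_eq, ← hy]; exact hdβ
        have : β ∈ Icc (y - s) (y + s) := by
          rcases abs_le.1 hdist with ⟨h1, h2⟩
          exact ⟨by linarith, by linarith⟩
        exact Or.inr (Set.mem_biUnion hyF this)
    have hmeaslt : MeasurableSet {β | t < d β ^ γ} :=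
      measurableSet_lt measurable_const hcont.measurable
    have hμ : volume (Icc βmin βmax)
        ≤ (volume.restrict (Icc βmin βmax)) {β | t < d β ^ γ}
          + ENNReal.ofReal (2 * ((n : ℝ) + 1) * s) := by
      rw [Measure.restrict_apply hmeaslt]
      calc volume (Icc βmin βmax)
          ≤ volume (({β | t < d β ^ γ} ∩ Icc βmin βmax) ∪ ⋃ x ∈ F, Icc (x - s) (x + s)) :=
            measure_mono cover
        _ ≤ volume ({β | t < d β ^ γ} ∩ Icc βmin βmax)
              + volume (⋃ x ∈ F, Icc (x - s) (x + s)) := measure_union_le _ _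
        _ ≤ _ + ENNReal.ofReal (2 * ((n : ℝ) + 1) * s) := by
            refine add_le_add le_rfl ?_
            calc volume (⋃ x ∈ F, Icc (x - s) (x + s))
                ≤ ∑ x ∈ F, volume (Icc (x - s) (x + s)) := measure_biUnion_finset_le F _
              _ = ∑ _x ∈ F, ENNReal.ofReal (2 * s) :=
                  Finset.sum_congr rfl fun x _ => by
                    rw [Real.volume_Icc, show x + s - (x - s) = 2 * s by ring]
              _ = F.card • ENNReal.ofReal (2 * s) := Finset.sum_const _
              _ ≤ ENNReal.ofReal (2 * ((n : ℝ) + 1) * s) := by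
                  rw [nsmul_eq_mul]
                  calc (F.card : ℝ≥0∞) * ENNReal.ofReal (2 * s)
                      ≤ (n : ℝ≥0∞) * ENNReal.ofReal (2 * s) := by
                        gcongr <;> exact_mod_cast hn
                    _ = ENNReal.ofReal ((n : ℝ)) * ENNReal.ofReal (2 * s) := by
                        rw [ENNReal.ofReal_natCast]
                    _ = ENNReal.ofReal ((n : ℝ) * (2 * s)) :=
                        (ENNReal.ofReal_mul (by positivity)).symm
                    _ ≤ ENNReal.ofReal (2 * ((n : ℝ) + 1) * s) := by
                        apply ENNReal.ofReal_le_ofReal; nlinarith [hs0]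
    rw [Real.volume_Icc, ← hBdef] at hμ
    rw [ENNReal.ofReal_sub _ (by positivity)]
    exact tsub_le_iff_right.2 hμ
  have hval : ∫ t in Ioc (0:ℝ) T, (B - 2 * ((n : ℝ) + 1) * t ^ (1/γ)) = B * T / (1 + γ) := by
    rw [← intervalIntegral.integral_of_le hT.le]
    rw [intervalIntegral.integral_sub intervalIntegrable_const
      ((intervalIntegral.intervalIntegrable_rpow
        (Or.inl (by positivity : (0:ℝ) ≤ 1/γ))).const_mul _)]
    rw [intervalIntegral.integral_const, intervalIntegral.integral_const_mul,
      integral_rpow (Or.inl (by have := one_div_pos.mpr hγ; linarith : (-1:ℝ) < 1/γ))]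
    rw [Real.zero_rpow (by positivity : 1/γ + 1 ≠ 0)]
    have hTpow : T ^ (1/γ + 1) = q * T := by
      rw [hTdef, ← Real.rpow_mul hq.le,
        show γ * (1/γ + 1) = 1 + γ by field_simp,
        Real.rpow_add hq, Real.rpow_one]
    rw [hTpow, smul_eq_mul, sub_zero, sub_zero]
    have hγ1 : 1/γ + 1 = (1 + γ)/γ := by field_simp
    rw [hγ1, div_div_eq_mul_div, ← h2q]
    have h1γ : (0:ℝ) < 1 + γ := by linarith
    field_simp
    ring
  have hnn : 0 ≤ᵐ[volume.restrict (Ioc (0:ℝ) T)]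
      fun t => B - 2 * ((n : ℝ) + 1) * t ^ (1/γ) := by
    filter_upwards [ae_restrict_mem measurableSet_Ioc] with t ht
    have h1 := hsle t ht
    have h2 := mul_le_mul_of_nonneg_left h1 (by positivity : (0:ℝ) ≤ 2 * ((n:ℝ) + 1))
    simp only [Pi.zero_apply]
    linarith [h2q ▸ h2]
  have hint : IntegrableOn (fun t => B - 2 * ((n : ℝ) + 1) * t ^ (1/γ)) (Ioc (0:ℝ) T) :=
    (continuous_const.sub (continuous_const.mul (Real.continuous_rpow_const (by positivity : (0:ℝ) ≤ 1/γ)))).integrableOn_Ioc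
  calc ENNReal.ofReal (B * q ^ γ / (1 + γ))
      = ENNReal.ofReal (∫ t in Ioc (0:ℝ) T, (B - 2 * ((n : ℝ) + 1) * t ^ (1/γ))) := by
        rw [hval, hTdef]
    _ = ∫⁻ t in Ioc (0:ℝ) T, ENNReal.ofReal (B - 2 * ((n : ℝ) + 1) * t ^ (1/γ)) :=
        ofReal_integral_eq_lintegral_ofReal hint hnn
    _ ≤ ∫⁻ t in Ioc (0:ℝ) T, (volume.restrict (Icc βmin βmax)) {β | t < d β ^ γ} := by
        refine lintegral_mono_ae ?_
        filter_upwards [ae_restrict_mem measurableSet_Ioc] with t ht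
        exact key t ht
    _ ≤ ∫⁻ t in Ioi (0:ℝ), (volume.restrict (Icc βmin βmax)) {β | t < d β ^ γ} :=
        lintegral_mono_set Ioc_subset_Ioi_self
    _ = ∫⁻ β in Icc βmin βmax, ENNReal.ofReal (d β ^ γ) ∂volume :=
        (lintegral_eq_lintegral_meas_lt _ (Filter.Eventually.of_forall fun β =>
          Real.rpow_nonneg (hd0 β) γ) hcont.measurable.aemeasurable).symm

/-- Bayesian upper bound (A.13) in the one-parameter case with identity scale: under
conditions (i), (ii) and (iii), every design supported at at most `N` points satisfies
`Ψ_st(ξ) ≤ c₃ log c₁ − (c₃/(1+γ))·(B/(2(N+1)))^γ`, where `B = β_max − β_min`. -/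
theorem bayesian_upper_bound_one_dim
    (X : Type*) [Nonempty X] (βmin βmax : ℝ) (hββ : βmin < βmax)
    (I : X → ℝ → ℝ) (hI : ∀ x : X, ∀ β ∈ Set.Icc βmin βmax, 0 ≤ I x β)
    (hIcont : ∀ x : X, Continuous (I x))
    (ξopt : ℝ → Design X)
    (hmeas : Measurable (fun β : ℝ => info I (ξopt β) β))
    (hpos : ∀ β ∈ Set.Icc βmin βmax, 0 < info I (ξopt β) β)
    (hopt : ∀ β ∈ Set.Icc βmin βmax, ∀ ξ : Design X, info I ξ β ≤ info I (ξopt β) β)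
    (c₁ c₃ γ : ℝ) (hc₁ : 0 < c₁) (hc₃ : 0 < c₃) (hγ : 0 < γ)
    -- condition (i):  I(x₀,β) ≤ M(ξ[β̃],β) for some β̃ ∈ ℬ and all β ∈ ℬ
    (h29 : ∀ x₀ : X, ∃ b ∈ Set.Icc βmin βmax,
        ∀ β ∈ Set.Icc βmin βmax, I x₀ β ≤ info I (ξopt b) β)
    -- condition (ii):  Q(β,β̃) ≤ c₁ exp(−|β − β̃|^γ)
    (h42 : ∀ β ∈ Set.Icc βmin βmax, ∀ b ∈ Set.Icc βmin βmax,
        info I (ξopt b) β / info I (ξopt β) β ≤ c₁ * Real.exp (-(|β - b| ^ γ)))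
    (B : ℝ) (hB : B = βmax - βmin)
    -- condition (iii): π is a Borel probability measure on ℬ with π(S) ≥ c₃ Leb(S)/B
    (π : MeasureTheory.Measure ℝ) [MeasureTheory.IsProbabilityMeasure π]
    (hπsupp : π (Set.Icc βmin βmax) = 1)
    (h43 : ∀ S : Set ℝ, S ⊆ Set.Icc βmin βmax → MeasurableSet S →
        ENNReal.ofReal c₃ * MeasureTheory.volume S ≤ ENNReal.ofReal B * π S)
    (N : ℕ) (ξ : Design X) (hcard : ξ.support.card ≤ N) :
    ENNReal.ofReal
        (-(c₃ * Real.log c₁ - c₃ / (1 + γ) * (B / (2 * ((N : ℝ) + 1))) ^ γ))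
      ≤ ∫⁻ β in Set.Icc βmin βmax,
          negLog (info I ξ β / info I (ξopt β) β) ∂π := by
  subst hB
  have hBpos : 0 < βmax - βmin := by linarith
  have hne : ξ.support.Nonempty := by
    rcases Finset.eq_empty_or_nonempty ξ.support with h | h
    · exfalso; have h1 := ξ.sum_one; rw [h] at h1; simp at h1
    · exact h
  choose b hbmem hble using h29
  set F : Finset ℝ := ξ.support.image b with hF
  have hFne : F.Nonempty := hne.image b
  set d : ℝ → ℝ := fun β => Metric.infDist β (↑F : Set ℝ) with hd
  have hd0 : ∀ β, 0 ≤ d β := fun _ => Metric.infDist_nonneg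
  have hdle : ∀ β : ℝ, ∀ x ∈ ξ.support, d β ≤ |β - b x| := by
    intro β x hx
    rw [← Real.dist_eq]
    exact Metric.infDist_le_dist_of_mem
      (Finset.mem_coe.2 (Finset.mem_image_of_mem b hx))
  have hdcont : Continuous d := Metric.continuous_infDist_pt _
  -- pointwise bound on the efficiency ratio
  have hpoint : ∀ β ∈ Set.Icc βmin βmax,
      info I ξ β / info I (ξopt β) β ≤ c₁ * Real.exp (-(d β ^ γ)) := by
    intro β hβ
    have hP := hpos β hβ
    rw [div_le_iff₀ hP]
    have hsum : info I ξ β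
        ≤ ∑ x ∈ ξ.support, ξ.w x * (c₁ * Real.exp (-(d β ^ γ)) * info I (ξopt β) β) := by
      refine Finset.sum_le_sum fun x hx => ?_
      refine mul_le_mul_of_nonneg_left ?_ (ξ.w_pos x hx).le
      calc I x β ≤ info I (ξopt (b x)) β := hble x β hβ
        _ ≤ c₁ * Real.exp (-(|β - b x| ^ γ)) * info I (ξopt β) β :=
            (div_le_iff₀ hP).1 (h42 β hβ (b x) (hbmem x))
        _ ≤ c₁ * Real.exp (-(d β ^ γ)) * info I (ξopt β) β := by
            refine mul_le_mul_of_nonneg_right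
              (mul_le_mul_of_nonneg_left ?_ hc₁.le) hP.le
            exact Real.exp_le_exp.2
              (neg_le_neg (Real.rpow_le_rpow (hd0 β) (hdle β x hx) hγ.le))
    rw [← Finset.sum_mul, ξ.sum_one, one_mul] at hsum
    exact hsum
  -- pointwise bound on negLog of the ratio
  have hneg : ∀ β ∈ Set.Icc βmin βmax,
      ENNReal.ofReal (d β ^ γ - Real.log c₁)
        ≤ negLog (info I ξ β / info I (ξopt β) β) := by
    intro β hβ
    unfold negLog
    by_cases hr : info I ξ β / info I (ξopt β) β ≤ 0
    · simp [hr]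
    · rw [if_neg hr]
      push_neg at hr
      apply ENNReal.ofReal_le_ofReal
      have hlog : Real.log (info I ξ β / info I (ξopt β) β)
          ≤ Real.log c₁ + -(d β ^ γ) := by
        calc Real.log (info I ξ β / info I (ξopt β) β)
            ≤ Real.log (c₁ * Real.exp (-(d β ^ γ))) :=
              Real.log_le_log hr (hpoint β hβ)
          _ = Real.log c₁ + -(d β ^ γ) := by
              rw [Real.log_mul hc₁.ne' (Real.exp_ne_zero _), Real.log_exp]
      linarith
  set g : ℝ → ℝ≥0∞ := fun β => ENNReal.ofReal (d β ^ γ - Real.log c₁) with hg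
  have hγ1 : (0:ℝ) < 1 + γ := by linarith
  set K : ℝ := ((βmax - βmin) / (2 * ((N:ℝ) + 1))) ^ γ / (1 + γ) with hK
  have hK0 : 0 ≤ K := by
    rw [hK]; positivity
  have hLHS : -(c₃ * Real.log c₁ - c₃ / (1 + γ) * ((βmax - βmin) / (2 * ((N : ℝ) + 1))) ^ γ)
      = c₃ * (K - Real.log c₁) := by rw [hK]; field_simp; ring
  rw [hLHS]
  by_cases hcase : K - Real.log c₁ ≤ 0
  · rw [ENNReal.ofReal_eq_zero.2 (mul_nonpos_of_nonneg_of_nonpos hc₃.le hcase)]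
    exact zero_le
  push_neg at hcase
  -- layer cake lower bound
  have hLγ : ENNReal.ofReal ((βmax - βmin) * K)
      ≤ ∫⁻ β in Set.Icc βmin βmax, ENNReal.ofReal (d β ^ γ) ∂MeasureTheory.volume := by
    have haux := aux_layercake F hFne βmin βmax hββ γ hγ N
      (le_trans Finset.card_image_le hcard)
    have : (βmax - βmin) * K
        = (βmax - βmin) * ((βmax - βmin) / (2 * ((N : ℝ) + 1))) ^ γ / (1 + γ) := by
      rw [hK]; ring
    rw [this]
    exact haux
  have hvolIcc : MeasureTheory.volume (Set.Icc βmin βmax)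
      = ENNReal.ofReal (βmax - βmin) := Real.volume_Icc
  -- lower bound on the volume integral of g
  have hLg : ENNReal.ofReal ((βmax - βmin) * (K - Real.log c₁))
      ≤ ∫⁻ β in Set.Icc βmin βmax, g β ∂MeasureTheory.volume := by
    by_cases hlog : 0 ≤ Real.log c₁
    · have hconst : (∫⁻ _β in Set.Icc βmin βmax,
            ENNReal.ofReal (Real.log c₁) ∂MeasureTheory.volume)
          = ENNReal.ofReal ((βmax - βmin) * Real.log c₁) := by
        rw [MeasureTheory.setLIntegral_const, hvolIcc,
          ← ENNReal.ofReal_mul hlog, mul_comm]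
      calc ENNReal.ofReal ((βmax - βmin) * (K - Real.log c₁))
          = ENNReal.ofReal ((βmax - βmin) * K - (βmax - βmin) * Real.log c₁) := by
            ring_nf
        _ = ENNReal.ofReal ((βmax - βmin) * K)
              - ENNReal.ofReal ((βmax - βmin) * Real.log c₁) :=
            ENNReal.ofReal_sub _ (by positivity)
        _ ≤ (∫⁻ β in Set.Icc βmin βmax, ENNReal.ofReal (d β ^ γ) ∂MeasureTheory.volume)
              - ∫⁻ _β in Set.Icc βmin βmax,
                  ENNReal.ofReal (Real.log c₁) ∂MeasureTheory.volume := by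
            rw [hconst]
            exact tsub_le_tsub hLγ le_rfl
        _ ≤ ∫⁻ β in Set.Icc βmin βmax,
              (ENNReal.ofReal (d β ^ γ) - ENNReal.ofReal (Real.log c₁))
                ∂MeasureTheory.volume :=
            MeasureTheory.lintegral_sub_le _ _ measurable_const
        _ = ∫⁻ β in Set.Icc βmin βmax, g β ∂MeasureTheory.volume := by
            refine MeasureTheory.lintegral_congr fun β => ?_
            rw [hg]
            exact (ENNReal.ofReal_sub _ hlog).symm
    · push_neg at hlog
      have hconst : (∫⁻ _β in Set.Icc βmin βmax,
            ENNReal.ofReal (-Real.log c₁) ∂MeasureTheory.volume)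
          = ENNReal.ofReal ((βmax - βmin) * -Real.log c₁) := by
        rw [MeasureTheory.setLIntegral_const, hvolIcc,
          ← ENNReal.ofReal_mul (by linarith), mul_comm]
      calc ENNReal.ofReal ((βmax - βmin) * (K - Real.log c₁))
          = ENNReal.ofReal ((βmax - βmin) * K + (βmax - βmin) * -Real.log c₁) := by
            ring_nf
        _ = ENNReal.ofReal ((βmax - βmin) * K)
              + ENNReal.ofReal ((βmax - βmin) * -Real.log c₁) :=
            ENNReal.ofReal_add (by positivity) (by nlinarith)
        _ ≤ (∫⁻ β in Set.Icc βmin βmax, ENNReal.ofReal (d β ^ γ) ∂MeasureTheory.volume)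
              + ∫⁻ _β in Set.Icc βmin βmax,
                  ENNReal.ofReal (-Real.log c₁) ∂MeasureTheory.volume := by
            rw [hconst]
            exact add_le_add hLγ le_rfl
        _ = ∫⁻ β in Set.Icc βmin βmax,
              (ENNReal.ofReal (d β ^ γ) + ENNReal.ofReal (-Real.log c₁))
                ∂MeasureTheory.volume :=
            (MeasureTheory.lintegral_add_right _ measurable_const).symm
        _ ≤ ∫⁻ β in Set.Icc βmin βmax, g β ∂MeasureTheory.volume := by
            refine MeasureTheory.lintegral_mono fun β => ?_
            rw [hg, ← ENNReal.ofReal_add (Real.rpow_nonneg (hd0 β) γ) (by linarith)]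
            exact ENNReal.ofReal_le_ofReal (le_of_eq (by ring))
  -- measure comparison
  have hcmp := aux_meas_compare π (Set.Icc βmin βmax) measurableSet_Icc c₃ (βmax - βmin)
    h43 g
  have hπmono : (∫⁻ β in Set.Icc βmin βmax, g β ∂π)
      ≤ ∫⁻ β in Set.Icc βmin βmax,
          negLog (info I ξ β / info I (ξopt β) β) ∂π := by
    refine MeasureTheory.lintegral_mono_ae ?_
    filter_upwards [MeasureTheory.ae_restrict_mem measurableSet_Icc] with β hβ
    exact hneg β hβ
  have hfin : ENNReal.ofReal (βmax - βmin) * ENNReal.ofReal (c₃ * (K - Real.log c₁))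
      ≤ ENNReal.ofReal (βmax - βmin)
          * ∫⁻ β in Set.Icc βmin βmax,
              negLog (info I ξ β / info I (ξopt β) β) ∂π := by
    calc ENNReal.ofReal (βmax - βmin) * ENNReal.ofReal (c₃ * (K - Real.log c₁))
        = ENNReal.ofReal c₃ * ENNReal.ofReal ((βmax - βmin) * (K - Real.log c₁)) := by
          rw [← ENNReal.ofReal_mul hBpos.le, ← ENNReal.ofReal_mul hc₃.le]
          ring_nf
      _ ≤ ENNReal.ofReal c₃ * ∫⁻ β in Set.Icc βmin βmax, g β ∂MeasureTheory.volume :=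
          mul_le_mul_right hLg _
      _ ≤ ENNReal.ofReal (βmax - βmin) * ∫⁻ β in Set.Icc βmin βmax, g β ∂π := hcmp
      _ ≤ _ := mul_le_mul_right hπmono _
  exact (ENNReal.mul_le_mul_iff_right (ENNReal.ofReal_pos.2 hBpos).ne'
    ENNReal.ofReal_ne_top).1 hfin
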